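/- arXiv:2111.13994 — 3 statements merged into one kernel-verified Lean document; each statement's English description precedes it below -/
import Mathlib

section
/- For every natural number L, the sum over n₁ ≥ 0 of q^(n₁²+n₁) times the Gaussian binomial coefficient (L choose n₁) in base q² equals the alternating sum over all integers j of (-1)^j q^(2j²+j) times the Gaussian binomial coefficient (2L+1 choose L-2j) in base q; equivalently, both equal the product (-q²;q²)_L = ∏_{k=1}^{L} (1+q^(2k)). -/
open LaurentPolynomial Finset

noncomputable section

/-- Gaussian binomial coefficient with natural indices, in base `x`, defined by the
`q`-Pascal recurrence `[n+1, k+1] = [n, k] + x^(k+1) * [n, k+1]`.  It vanishes for `k > n`. -/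
def gaussAux (x : LaurentPolynomial ℤ) : ℕ → ℕ → LaurentPolynomial ℤ
  | _, 0 => 1
  | 0, _ + 1 => 0
  | n + 1, k + 1 => gaussAux x n k + x ^ (k + 1) * gaussAux x n (k + 1)

/-- The Gaussian binomial coefficient `[n choose k]` in base `x`, for integer indices:
it is zero when `n < 0` or `k < 0` (and, by `gaussAux`, also when `k > n`). -/
def qbin (x : LaurentPolynomial ℤ) (n k : ℤ) : LaurentPolynomial ℤ :=
  if 0 ≤ n ∧ 0 ≤ k then gaussAux x n.toNat k.toNat else 0

/-- `(-1)^j` for an integer `j`, as a Laurent polynomial. -/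
def m1 (j : ℤ) : LaurentPolynomial ℤ := ((((-1 : ℤˣ) ^ j : ℤˣ) : ℤ) : LaurentPolynomial ℤ)

variable {x : LaurentPolynomial ℤ}

lemma gaussAux_zero (x : LaurentPolynomial ℤ) (n : ℕ) : gaussAux x n 0 = 1 := by
  cases n <;> rfl

lemma gaussAux_succ (x : LaurentPolynomial ℤ) (n k : ℕ) :
    gaussAux x (n+1) (k+1) = gaussAux x n k + x ^ (k + 1) * gaussAux x n (k + 1) := rfl

lemma gaussAux_of_lt (x : LaurentPolynomial ℤ) : ∀ n k : ℕ, n < k → gaussAux x n k = 0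
  | 0, _ + 1, _ => rfl
  | n + 1, k + 1, h => by
    rw [gaussAux_succ, gaussAux_of_lt x n k (by omega), gaussAux_of_lt x n (k+1) (by omega)]
    ring

lemma gaussAux_self (x : LaurentPolynomial ℤ) : ∀ n : ℕ, gaussAux x n n = 1
  | 0 => rfl
  | n + 1 => by
    rw [gaussAux_succ, gaussAux_self x n, gaussAux_of_lt x n (n+1) (by omega)]
    ring

lemma gaussAux_dual (x : LaurentPolynomial ℤ) :
    ∀ n k : ℕ, gaussAux x (n+1) (k+1) = x ^ (n - k) * gaussAux x n k + gaussAux x n (k+1)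
  | 0, 0 => by
    rw [gaussAux_succ, gaussAux_of_lt x 0 1 (by omega)]
    simp [gaussAux_zero]
  | 0, k + 1 => by
    rw [gaussAux_succ, gaussAux_of_lt x 0 (k+1) (by omega), gaussAux_of_lt x 0 (k+2) (by omega)]
    ring
  | n + 1, 0 => by
    have hf : gaussAux x (n+1+1) (0+1) = gaussAux x (n+1) 0 + x ^ (0+1) * gaussAux x (n+1) (0+1) :=
      gaussAux_succ x (n+1) 0
    have hd := gaussAux_dual x n 0
    have hf2 : gaussAux x (n+1) (0+1) = gaussAux x n 0 + x ^ (0+1) * gaussAux x n (0+1) :=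
      gaussAux_succ x n 0
    rw [hf]
    simp only [Nat.sub_zero, gaussAux_zero, Nat.add_sub_cancel] at hd hf2 ⊢
    linear_combination x * hd - hf2
  | n + 1, k + 1 => by
    have hf : gaussAux x (n+1+1) (k+1+1) =
        gaussAux x (n+1) (k+1) + x ^ (k+1+1) * gaussAux x (n+1) (k+1+1) :=
      gaussAux_succ x (n+1) (k+1)
    have h1 := gaussAux_dual x n k
    have h2 := gaussAux_dual x n (k+1)
    have hf1 : gaussAux x (n+1) (k+1) = gaussAux x n k + x ^ (k+1) * gaussAux x n (k+1) :=
      gaussAux_succ x n k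
    have hf2 : gaussAux x (n+1) (k+1+1) =
        gaussAux x n (k+1) + x ^ (k+1+1) * gaussAux x n (k+1+1) :=
      gaussAux_succ x n (k+1)
    rcases Nat.lt_or_ge k n with hk | hk
    · obtain ⟨m, rfl⟩ : ∃ m, n = k + 1 + m := ⟨n - (k + 1), by omega⟩
      have e1 : k + 1 + m - k = m + 1 := by omega
      have e2 : k + 1 + m - (k+1) = m := by omega
      have e3 : k + 1 + m + 1 - (k+1) = m + 1 := by omega
      rw [e1] at h1
      rw [e2] at h2
      rw [e3]
      linear_combination hf + h1 - x^(m+1) * hf1 + x^(k+2) * h2 - hf2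
    · have z1 : gaussAux x n (k+1) = 0 := gaussAux_of_lt x n (k+1) (by omega)
      have z2 : gaussAux x n (k+1+1) = 0 := gaussAux_of_lt x n (k+2) (by omega)
      have e1 : n - k = 0 ∨ n - k = 0 := Or.inl (by omega)
      have e2 : n + 1 - (k + 1) = n - k := by omega
      have e4 : n - k = 0 := by omega
      rw [hf, hf1, hf2, e2, z1, z2, e4]
      ring

lemma gaussAux_symm (x : LaurentPolynomial ℤ) :
    ∀ n k : ℕ, k ≤ n → gaussAux x n (n - k) = gaussAux x n k
  | 0, 0, _ => rfl
  | n + 1, 0, _ => by rw [Nat.sub_zero, gaussAux_self, gaussAux_zero]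
  | n + 1, k + 1, h => by
    rcases Nat.lt_or_ge (k + 1) (n + 1) with hk | hk
    · have h1 : n + 1 - (k + 1) = (n - (k + 1)) + 1 := by omega
      rw [h1, gaussAux_succ]
      rw [show n - (k + 1) + 1 = n - k from by omega]
      rw [gaussAux_symm x n (k+1) (by omega), gaussAux_symm x n k (by omega)]
      rw [gaussAux_dual x n k]
      ring
    · have : k + 1 = n + 1 := by omega
      rw [this, Nat.sub_self, gaussAux_zero, gaussAux_self]

lemma qbin_nat (x : LaurentPolynomial ℤ) (n k : ℕ) : qbin x n k = gaussAux x n k := by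
  simp [qbin]

lemma qbin_zero (x : LaurentPolynomial ℤ) (n : ℕ) : qbin x (n : ℤ) 0 = 1 := by
  have : ((0:ℕ):ℤ) = 0 := rfl
  rw [← this, qbin_nat, gaussAux_zero]

lemma qbin_neg {m : ℤ} (x : LaurentPolynomial ℤ) (n : ℤ) (h : m < 0) : qbin x n m = 0 := by
  rw [qbin, if_neg]; omega

lemma qbin_big {m : ℤ} (x : LaurentPolynomial ℤ) (n : ℕ) (h : (n : ℤ) < m) : qbin x n m = 0 := by
  rcases le_or_gt 0 m with hm | hm
  · rw [qbin, if_pos ⟨by positivity, hm⟩]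
    exact gaussAux_of_lt x _ _ (by omega)
  · exact qbin_neg x n (by omega)

lemma qbin_pascal (n : ℕ) (m : ℤ) :
    qbin (T 1) (n+1) m = qbin (T 1) n (m-1) + T m * qbin (T 1) n m := by
  rcases lt_trichotomy m 0 with hm | hm | hm
  · rw [qbin_neg _ _ hm, qbin_neg _ _ hm, qbin_neg _ _ (by omega : m - 1 < 0)]
    ring
  · subst hm
    rw [qbin_neg _ _ (by omega : (0:ℤ) - 1 < 0), T_zero]
    have h1 : ((n:ℤ)+1) = ((n+1 : ℕ) : ℤ) := by norm_cast
    rw [h1, qbin_zero, qbin_zero]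
    ring
  · obtain ⟨k, rfl⟩ : ∃ k : ℕ, m = (k : ℤ) + 1 := ⟨(m-1).toNat, by omega⟩
    have h1 : ((n:ℤ)+1) = ((n+1 : ℕ) : ℤ) := by norm_cast
    have h2 : ((k:ℤ)+1) = ((k+1 : ℕ) : ℤ) := by push_cast; ring
    have h3 : ((k:ℤ)+1-1) = ((k : ℕ) : ℤ) := by ring
    rw [h1, h3]
    rw [show ((T ((k:ℤ)+1)) : LaurentPolynomial ℤ) = (T 1)^(k+1) from by rw [T_pow]; norm_num]
    rw [h2, qbin_nat, qbin_nat, qbin_nat, gaussAux_succ]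

lemma qbin_pascal' (n : ℕ) (m : ℤ) :
    qbin (T 1) (n+1) m = T ((n:ℤ)+1-m) * qbin (T 1) n (m-1) + qbin (T 1) n m := by
  rcases lt_trichotomy m 0 with hm | hm | hm
  · rw [qbin_neg _ _ hm, qbin_neg _ _ hm, qbin_neg _ _ (by omega : m - 1 < 0)]
    ring
  · subst hm
    rw [qbin_neg _ _ (by omega : (0:ℤ) - 1 < 0)]
    have h1 : ((n:ℤ)+1) = ((n+1 : ℕ) : ℤ) := by norm_cast
    rw [h1, qbin_zero, qbin_zero]
    ring
  · rcases le_or_gt m ((n:ℤ)+1) with hm2 | hm2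
    · obtain ⟨k, rfl⟩ : ∃ k : ℕ, m = (k : ℤ) + 1 := ⟨(m-1).toNat, by omega⟩
      have hkn : k ≤ n := by omega
      have h1 : ((n:ℤ)+1) = ((n+1 : ℕ) : ℤ) := by norm_cast
      have h2 : ((k:ℤ)+1) = ((k+1 : ℕ) : ℤ) := by push_cast; ring
      have h3 : ((k:ℤ)+1-1) = ((k : ℕ) : ℤ) := by ring
      have h4 : ((n:ℤ)+1-((k:ℤ)+1)) = (((n - k : ℕ) : ℤ)) := by
        rw [Nat.cast_sub hkn]; ring
      rw [h4, show ((T (((n-k : ℕ)):ℤ)) : LaurentPolynomial ℤ) = (T 1)^(n-k) from by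
        rw [T_pow]; norm_num]
      rw [h1, h3]
      rw [h2, qbin_nat, qbin_nat, qbin_nat]
      exact gaussAux_dual _ n k
    · have h1 : ((n:ℤ)+1) = ((n+1 : ℕ) : ℤ) := by norm_cast
      rw [h1, qbin_big (m := m) _ (n+1) (by push_cast; omega), qbin_big (m := m) _ n (by omega),
        qbin_big (m := m - 1) _ n (by omega)]
      ring

lemma qbin_symm (x : LaurentPolynomial ℤ) (n : ℕ) (m : ℤ) :
    qbin x n m = qbin x n ((n : ℤ) - m) := by
  rcases lt_or_ge m 0 with hm | hm
  · rw [qbin_neg _ _ hm, qbin_big x n (by omega)]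
  rcases le_or_gt m n with hm2 | hm2
  · have h1 : ((n:ℤ) - m).toNat = n - m.toNat := by omega
    rw [qbin, if_pos ⟨by positivity, hm⟩, qbin, if_pos ⟨by positivity, by omega⟩, h1]
    rw [show ((n:ℤ).toNat) = n from by omega]
    rw [gaussAux_symm x n m.toNat (by omega)]
  · rw [qbin_big x n hm2, qbin_neg _ _ (by omega : (n:ℤ) - m < 0)]

lemma m1_zero : m1 0 = 1 := by simp [m1]

lemma m1_add_one (j : ℤ) : m1 (j + 1) = - m1 j := by
  unfold m1
  rw [zpow_add_one]
  push_cast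
  ring

lemma m1_neg (j : ℤ) : m1 (-j) = m1 j := by
  unfold m1
  rw [zpow_neg, ← inv_zpow, show ((-1:ℤˣ))⁻¹ = -1 from by decide]

/-- The general alternating sum term. -/
def Wf (N : ℕ) (c a : ℤ) (j : ℤ) : LaurentPolynomial ℤ :=
  m1 j * T (2*j^2 + a*j) * qbin (T 1) N (c - 2*j)

/-- The general alternating sum. -/
def Ws (N : ℕ) (c a : ℤ) : LaurentPolynomial ℤ := ∑ᶠ j : ℤ, Wf N c a j

lemma Wf_supp (N : ℕ) (c a : ℤ) : (Function.support (Wf N c a)).Finite := by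
  apply Set.Finite.subset (Set.finite_Icc (-(N:ℤ) - c.natAbs - 1) ((N:ℤ) + c.natAbs + 1))
  intro j hj
  rw [Set.mem_Icc]
  by_contra hcon
  apply hj
  have : qbin (T 1) N (c - 2*j) = 0 := by
    rcases lt_or_ge (c - 2*j) 0 with h | h
    · exact qbin_neg _ _ h
    · exact qbin_big _ _ (by omega)
  simp [Wf, this]

lemma Wf_supp' (N : ℕ) (c a r : ℤ) :
    (Function.support (fun j => T r * Wf N c a j)).Finite := by
  apply Set.Finite.subset (Wf_supp N c a)
  intro j hj
  simp only [Function.mem_support] at hj ⊢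
  exact fun h => hj (by rw [h, mul_zero])

lemma Ws_pascal (N : ℕ) (c a : ℤ) :
    Ws (N+1) c a = Ws N (c-1) a + T c * Ws N c (a-2) := by
  rw [Ws, Ws, Ws, mul_finsum _ _,
    ← finsum_add_distrib (Wf_supp N (c-1) a) (Wf_supp' N c (a-2) c)]
  refine finsum_congr fun j => ?_
  unfold Wf
  have h1 : ((N:ℤ)+1) = ((N+1 : ℕ) : ℤ) := by push_cast; ring
  rw [← h1, qbin_pascal N (c - 2*j)]
  rw [show c - 2*j - 1 = c - 1 - 2*j from by ring]
  have h2 : (T (2*j^2 + a*j) : LaurentPolynomial ℤ) * T (c - 2*j) = T c * T (2*j^2 + (a-2)*j) := by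
    rw [← T_add, ← T_add]
    congr 1
    ring
  calc m1 j * T (2*j^2 + a*j) * (qbin (T 1) N (c - 1 - 2*j) + T (c - 2*j) * qbin (T 1) N (c - 2*j))
      = m1 j * T (2*j^2 + a*j) * qbin (T 1) N (c - 1 - 2*j)
        + m1 j * (T (2*j^2 + a*j) * T (c - 2*j)) * qbin (T 1) N (c - 2*j) := by ring
    _ = _ := by rw [h2]; ring

lemma Ws_pascal' (N : ℕ) (c a : ℤ) :
    Ws (N+1) c a = T ((N:ℤ)+1-c) * Ws N (c-1) (a+2) + Ws N c a := by
  rw [Ws, Ws, Ws, mul_finsum _ _,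
    ← finsum_add_distrib (Wf_supp' N (c-1) (a+2) ((N:ℤ)+1-c)) (Wf_supp N c a)]
  refine finsum_congr fun j => ?_
  unfold Wf
  have h1 : ((N:ℤ)+1) = ((N+1 : ℕ) : ℤ) := by push_cast; ring
  rw [← h1, qbin_pascal' N (c - 2*j)]
  rw [show c - 2*j - 1 = c - 1 - 2*j from by ring]
  have h2 : (T (2*j^2 + a*j) : LaurentPolynomial ℤ) * T ((N:ℤ) + 1 - (c - 2*j))
      = T ((N:ℤ)+1-c) * T (2*j^2 + (a+2)*j) := by
    rw [← T_add, ← T_add]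
    congr 1
    ring
  calc m1 j * T (2*j^2 + a*j) *
        (T ((N:ℤ) + 1 - (c - 2*j)) * qbin (T 1) N (c - 1 - 2*j) + qbin (T 1) N (c - 2*j))
      = m1 j * (T (2*j^2 + a*j) * T ((N:ℤ) + 1 - (c - 2*j))) * qbin (T 1) N (c - 1 - 2*j)
        + m1 j * T (2*j^2 + a*j) * qbin (T 1) N (c - 2*j) := by ring
    _ = _ := by rw [h2]; ring

lemma Ws_symm (N : ℕ) (c a : ℤ) : Ws N c a = Ws N ((N:ℤ) - c) (-a) := by
  rw [Ws, Ws, ← finsum_comp_equiv (Equiv.neg ℤ) (f := Wf N ((N:ℤ) - c) (-a))]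
  refine finsum_congr fun j => ?_
  unfold Wf
  simp only [Equiv.neg_apply]
  rw [m1_neg, qbin_symm (T 1) N (c - 2*j)]
  rw [show (N:ℤ) - (c - 2*j) = (N:ℤ) - c - 2 * (-j) from by ring,
    show 2*(-j)^2 + -a * -j = 2*j^2 + a*j from by ring]

lemma Ws_shift (N : ℕ) (c : ℤ) : Ws N c 3 = (-(T (-1))) * Ws N ((N:ℤ) - c - 2) 1 := by
  rw [Ws, Ws, mul_finsum _ _,
    ← finsum_comp_equiv (Equiv.trans (Equiv.neg ℤ) (Equiv.addLeft (-1 : ℤ)))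
      (f := fun j => -(T (-1)) * Wf N ((N:ℤ) - c - 2) 1 j)]
  refine finsum_congr fun j => ?_
  simp only [Equiv.trans_apply, Equiv.neg_apply, Equiv.coe_addLeft]
  unfold Wf
  rw [show (-1 : ℤ) + -j = -(j + 1) from by ring, m1_neg, m1_add_one]
  have hE : (T (2*(-(j+1))^2 + 1*(-(j+1))) : LaurentPolynomial ℤ)
      = T 1 * T (2*j^2 + 3*j) := by
    rw [← T_add]; congr 1; ring
  have hD : qbin (T 1) ((N:ℕ):ℤ) ((N:ℤ) - c - 2 - 2 * (-(j+1)))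
      = qbin (T 1) ((N:ℕ):ℤ) (c - 2*j) := by
    rw [show (N:ℤ) - c - 2 - 2 * (-(j+1)) = (N:ℤ) - (c - 2*j) from by ring, ← qbin_symm]
  rw [hE, hD]
  have hT : (T (-1) : LaurentPolynomial ℤ) * T 1 = 1 := by
    rw [← T_add]; norm_num
  linear_combination (-(m1 j * T (2*j^2 + 3*j) * qbin (T 1) ((N:ℕ):ℤ) (c - 2*j))) * hT

lemma Ws_base : Ws 1 0 1 = 1 := by
  rw [Ws, finsum_eq_single _ (0 : ℤ)]
  · unfold Wf
    rw [m1_zero, show 2*(0:ℤ)^2 + 1*0 = 0 from by norm_num, T_zero,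
      show (0:ℤ) - 2*0 = 0 from by norm_num, qbin_zero (T 1) 1]
    norm_num
  · intro j hj
    unfold Wf
    have : qbin (T 1) (1:ℕ) (0 - 2*j) = 0 := by
      rcases lt_or_ge j 0 with h | h
      · exact qbin_big _ _ (by omega)
      · exact qbin_neg _ _ (by omega)
    rw [this, mul_zero]

lemma Ws_main (L : ℕ) : Ws (2*L+1) (L:ℤ) 1 = ∏ k ∈ Finset.Icc 1 L, (1 + T (2 * (k:ℤ))) := by
  induction L with
  | zero => simpa using Ws_base
  | succ L ih =>
    have key : Ws (2*(L+1)+1) ((L:ℤ)+1) 1 = (1 + T (2*((L:ℤ)+1))) * Ws (2*L+1) (L:ℤ) 1 := by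
      have h1 : 2*(L+1)+1 = (2*L+2)+1 := by ring
      rw [h1, Ws_pascal' (2*L+2) ((L:ℤ)+1) 1]
      have h2 : Ws (2*L+2) ((L:ℤ)+1-1) (1+2) = Ws (2*L+1) ((L:ℤ)-1) 3 + T (L:ℤ) * Ws (2*L+1) (L:ℤ) 1 := by
        rw [show ((L:ℤ)+1-1) = (L:ℤ) from by ring, show ((1:ℤ)+2) = 3 from by norm_num,
          show (2*L+2) = (2*L+1)+1 from by ring, Ws_pascal (2*L+1) (L:ℤ) 3]
        norm_num
      have h3 : Ws (2*L+1) ((L:ℤ)-1) 3 = (-(T (-1))) * Ws (2*L+1) (L:ℤ) 1 := by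
        rw [Ws_shift (2*L+1) ((L:ℤ)-1)]
        congr 2
        push_cast
        ring
      have h4 : Ws (2*L+2) ((L:ℤ)+1) 1 = Ws (2*L+1) (L:ℤ) 1 + T ((L:ℤ)+1) * Ws (2*L+1) ((L:ℤ)+1) (-1) := by
        rw [show (2*L+2) = (2*L+1)+1 from by ring, Ws_pascal (2*L+1) ((L:ℤ)+1) 1]
        norm_num
      have h5 : Ws (2*L+1) ((L:ℤ)+1) (-1) = Ws (2*L+1) (L:ℤ) 1 := by
        rw [Ws_symm (2*L+1) ((L:ℤ)+1) (-1)]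
        norm_num
        congr 1
        ring
      rw [h2, h3, h4, h5]
      have hcast : ((2*L+2 : ℕ) : ℤ) + 1 - ((L:ℤ)+1) = (L:ℤ)+2 := by push_cast; ring
      rw [hcast]
      have hT1 : (T ((L:ℤ)+2) : LaurentPolynomial ℤ) * T (-1) = T ((L:ℤ)+1) := by
        rw [← T_add]; congr 1; ring
      have hT2 : (T ((L:ℤ)+2) : LaurentPolynomial ℤ) * T (L:ℤ) = T (2*((L:ℤ)+1)) := by
        rw [← T_add]; congr 1; ring
      calc T ((L:ℤ)+2) * ((-(T (-1))) * Ws (2*L+1) (L:ℤ) 1 + T (L:ℤ) * Ws (2*L+1) (L:ℤ) 1)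
            + (Ws (2*L+1) (L:ℤ) 1 + T ((L:ℤ)+1) * Ws (2*L+1) (L:ℤ) 1)
          = (1 + T ((L:ℤ)+2) * T (L:ℤ)) * Ws (2*L+1) (L:ℤ) 1
            + (T ((L:ℤ)+1) - T ((L:ℤ)+2) * T (-1)) * Ws (2*L+1) (L:ℤ) 1 := by ring
        _ = _ := by rw [hT1, hT2]; ring
    have hc : ((L+1 : ℕ) : ℤ) = (L:ℤ)+1 := by push_cast; ring
    rw [hc, key, ih, Finset.prod_Icc_succ_top (by omega : 1 ≤ L + 1)]
    rw [hc]
    ring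

/-- The sum in the first identity, as a finite sum. -/
def SL (L : ℕ) : LaurentPolynomial ℤ :=
  ∑ n ∈ Finset.range (L+1), T ((n:ℤ)^2 + n) * gaussAux (T 2) L n

lemma SL_succ (L : ℕ) : SL (L+1) = (1 + T (2*(L:ℤ)+2)) * SL L := by
  have hg : ∀ n : ℕ, (fun n : ℕ => T ((n:ℤ)^2 + n) * gaussAux (T 2) (L+1) n) 0 = 1 := by
    intro n
    simp [gaussAux_zero, T_zero]
  rw [SL, Finset.sum_range_succ' (fun n : ℕ => T ((n:ℤ)^2 + n) * gaussAux (T 2) (L+1) n) (L+1)]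
  have key : ∀ i ∈ Finset.range (L+1),
      T (((i+1 : ℕ):ℤ)^2 + ((i+1 : ℕ):ℤ)) * gaussAux (T 2) (L+1) (i+1)
      = T (2*(L:ℤ)+2) * (T ((i:ℤ)^2 + i) * gaussAux (T 2) L i)
        + T (((i+1 : ℕ):ℤ)^2 + ((i+1 : ℕ):ℤ)) * gaussAux (T 2) L (i+1) := by
    intro i hi
    have hiL : i ≤ L := by simpa using Nat.lt_succ_iff.mp (Finset.mem_range.mp hi)
    rw [gaussAux_dual (T 2) L i]
    have hp : ((T 2 : LaurentPolynomial ℤ)) ^ (L - i) = T (2*(L:ℤ) - 2*(i:ℤ)) := by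
      rw [T_pow]
      congr 1
      have : ((L - i : ℕ) : ℤ) = (L:ℤ) - (i:ℤ) := by
        rw [Nat.cast_sub hiL]
      rw [this]
      ring
    rw [hp]
    have hT : (T (((i+1 : ℕ):ℤ)^2 + ((i+1 : ℕ):ℤ)) : LaurentPolynomial ℤ)
        * T (2*(L:ℤ) - 2*(i:ℤ))
        = T (2*(L:ℤ)+2) * T ((i:ℤ)^2 + i) := by
      rw [← T_add, ← T_add]
      congr 1
      push_cast
      ring
    calc T (((i+1 : ℕ):ℤ)^2 + ((i+1 : ℕ):ℤ))
          * (T (2*(L:ℤ) - 2*(i:ℤ)) * gaussAux (T 2) L i + gaussAux (T 2) L (i+1))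
        = (T (((i+1 : ℕ):ℤ)^2 + ((i+1 : ℕ):ℤ)) * T (2*(L:ℤ) - 2*(i:ℤ))) * gaussAux (T 2) L i
          + T (((i+1 : ℕ):ℤ)^2 + ((i+1 : ℕ):ℤ)) * gaussAux (T 2) L (i+1) := by ring
      _ = _ := by rw [hT]; ring
  rw [Finset.sum_congr rfl key, Finset.sum_add_distrib, ← Finset.mul_sum]
  have hB : ∑ i ∈ Finset.range (L+1), T (((i+1 : ℕ):ℤ)^2 + ((i+1 : ℕ):ℤ)) * gaussAux (T 2) L (i+1)
      = SL L - T (((0:ℕ):ℤ)^2 + ((0:ℕ):ℤ)) * gaussAux (T 2) L 0 := by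
    have h := Finset.sum_range_succ' (fun n : ℕ => T ((n:ℤ)^2 + n) * gaussAux (T 2) L n) (L+1)
    have h2 : ∑ n ∈ Finset.range (L+1+1), T ((n:ℤ)^2 + n) * gaussAux (T 2) L n = SL L := by
      rw [Finset.sum_range_succ, gaussAux_of_lt (T 2) L (L+1) (by omega), SL]
      ring
    rw [h2] at h
    linear_combination -h
  rw [hB]
  simp only [Nat.cast_zero, gaussAux_zero, gaussAux_succ]
  rw [show (∑ i ∈ Finset.range (L+1), T ((i:ℤ)^2 + (i:ℤ)) * gaussAux (T 2) L i) = SL L from rfl]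
  ring

lemma SL_main (L : ℕ) : SL L = ∏ k ∈ Finset.Icc 1 L, (1 + T (2 * (k:ℤ))) := by
  induction L with
  | zero =>
    simp [SL, gaussAux_zero]
  | succ L ih =>
    rw [SL_succ, ih, Finset.prod_Icc_succ_top (by omega : 1 ≤ L + 1),
      show (2 * ((L+1:ℕ):ℤ)) = 2*(L:ℤ)+2 from by push_cast; ring]
    ring

lemma Sfin (L : ℕ) :
    (∑ᶠ n₁ : ℕ, T ((n₁:ℤ)^2 + n₁) * qbin (T 2) L n₁) = SL L := by
  rw [finsum_eq_sum_of_support_subset _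
    (s := Finset.range (L+1)) (by
      intro n hn
      simp only [Function.mem_support] at hn
      by_contra hc
      apply hn
      have hnL : L < n := by
        simp only [Finset.coe_range, Set.mem_Iio] at hc
        omega
      rw [qbin_nat, gaussAux_of_lt (T 2) L n hnL, mul_zero])]
  exact Finset.sum_congr rfl fun n _ => by rw [qbin_nat]

theorem stmt0 (L : ℕ) :
    (∑ᶠ n₁ : ℕ, T ((n₁ : ℤ) ^ 2 + n₁) * qbin (T 2) L n₁) =
      (∑ᶠ j : ℤ, m1 j * T (2 * j ^ 2 + j) * qbin (T 1) (2 * L + 1) (L - 2 * j)) ∧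
    (∑ᶠ j : ℤ, m1 j * T (2 * j ^ 2 + j) * qbin (T 1) (2 * L + 1) (L - 2 * j)) =
      ∏ k ∈ Finset.Icc 1 L, (1 + T (2 * (k : ℤ))) := by
  have h2 : (∑ᶠ j : ℤ, m1 j * T (2 * j ^ 2 + j) * qbin (T 1) (2 * L + 1) (L - 2 * j))
      = ∏ k ∈ Finset.Icc 1 L, (1 + T (2 * (k : ℤ))) := by
    rw [← Ws_main L, Ws]
    refine finsum_congr fun j => ?_
    unfold Wf
    rw [show 2*j^2 + 1*j = 2*j^2 + j from by ring,
      show ((2*L+1 : ℕ):ℤ) = 2*(L:ℤ)+1 from by push_cast; ring]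
  refine ⟨?_, h2⟩
  rw [Sfin, SL_main, h2]
end
end

section
/- For every positive natural number L, define A(L) = Σ_j (-1)^j q^(2j²) [2L choose L-2j-1]_q. Then A(L) = (-q;q²)_{L-1} (1 - q^(2L)), i.e., A(L) equals ∏_{k=1}^{L-1}(1+q^(2k-1)) times (1-q^(2L)). -/
open LaurentPolynomial Finset

noncomputable section

namespace Stmt4aux

abbrev R := LaurentPolynomial ℤ

lemma gaussAux_succ (x : R) (n k : ℕ) :
    gaussAux x (n+1) (k+1) = gaussAux x n k + x ^ (k + 1) * gaussAux x n (k + 1) := rfl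

lemma gaussAux_zero_right (x : R) (n : ℕ) : gaussAux x n 0 = 1 := by cases n <;> rfl

lemma gaussAux_zero_left (x : R) (k : ℕ) : gaussAux x 0 (k+1) = 0 := rfl

lemma gaussAux_eq_zero (x : R) : ∀ n k : ℕ, n < k → gaussAux x n k = 0
  | _, 0, h => by omega
  | 0, _+1, _ => rfl
  | n+1, k+1, h => by
    rw [gaussAux_succ, gaussAux_eq_zero x n k (by omega), gaussAux_eq_zero x n (k+1) (by omega),
      mul_zero, add_zero]

lemma qbin_neg {x : R} {n k : ℤ} (h : k < 0) : qbin x n k = 0 := by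
  rw [qbin, if_neg]; omega

lemma qbin_gt {x : R} {n k : ℤ} (h : n < k) : qbin x n k = 0 := by
  rw [qbin]
  split_ifs with h'
  · exact gaussAux_eq_zero x _ _ (by omega)
  · rfl

lemma qbin_natCast (x : R) (n k : ℕ) : qbin x (n : ℤ) (k : ℤ) = gaussAux x n k := by
  simp [qbin]

lemma T_one_pow (m : ℕ) : (T 1 : R) ^ m = T (m : ℤ) := by rw [T_pow, mul_one]

lemma pascal1 (n : ℕ) (k : ℤ) :
    qbin (T 1) ((n : ℤ) + 1) k = qbin (T 1) n (k - 1) + T k * qbin (T 1) n k := by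
  rcases lt_trichotomy k 0 with hk | hk | hk
  · rw [qbin_neg hk, qbin_neg (by omega), qbin_neg hk, mul_zero, add_zero]
  · subst hk
    rw [qbin_neg (by omega : (0:ℤ) - 1 < 0), T_zero, one_mul, zero_add]
    rw [show ((n:ℤ)+1) = ((n+1 : ℕ) : ℤ) by push_cast; ring, show (0:ℤ) = ((0:ℕ):ℤ) from rfl,
      qbin_natCast, qbin_natCast, gaussAux_zero_right, gaussAux_zero_right]
  · obtain ⟨m, rfl⟩ : ∃ m : ℕ, k = ((m+1 : ℕ) : ℤ) := ⟨(k-1).toNat, by omega⟩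
    rw [show ((n:ℤ)+1) = ((n+1 : ℕ) : ℤ) by push_cast; ring,
      show ((m+1 : ℕ) : ℤ) - 1 = ((m : ℕ) : ℤ) by push_cast; ring,
      qbin_natCast, qbin_natCast, qbin_natCast, gaussAux_succ, T_one_pow]

lemma gauss_pascal2 : ∀ n k : ℕ, gaussAux (T 1) (n+1) (k+1)
    = T ((n : ℤ) - (k : ℤ)) * gaussAux (T 1) n k + gaussAux (T 1) n (k+1) := by
  intro n
  induction n with
  | zero =>
    intro k
    cases k with
    | zero => simp [gaussAux_succ, gaussAux_zero_right, gaussAux_zero_left]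
    | succ k => simp [gaussAux_succ, gaussAux_zero_left, gaussAux_eq_zero (T 1) 0 (k+1) (by omega)]
  | succ n ih =>
    intro k
    cases k with
    | zero =>
      have hg := ih 0
      have hd := gaussAux_succ (T 1) n 0
      rw [gaussAux_succ (T 1) (n+1) 0, gaussAux_zero_right, T_one_pow] at *
      push_cast at hg hd ⊢
      rw [show (n:ℤ)+1-0 = 1 + ((n:ℤ)-0) by ring, T_add]
      linear_combination (T 1 : R) * hg - hd
    | succ k =>
      have h1 := ih k
      have h2 := ih (k+1)
      have d1 := gaussAux_succ (T 1) n k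
      have d2 := gaussAux_succ (T 1) n (k+1)
      rw [T_one_pow] at d1 d2
      rw [gaussAux_succ (T 1) (n+1) (k+1), T_one_pow]
      push_cast at h1 h2 d1 d2 ⊢
      rw [show (n:ℤ)+1-((k:ℤ)+1) = (n:ℤ)-(k:ℤ) by ring]
      have eA : (T ((k:ℤ)+1+1) : R) * T ((n:ℤ) - ((k:ℤ)+1)) = T ((n:ℤ)-(k:ℤ)) * T ((k:ℤ)+1) := by
        rw [← T_add, ← T_add, show (k:ℤ)+1+1 + ((n:ℤ) - ((k:ℤ)+1)) = (n:ℤ)-(k:ℤ) + ((k:ℤ)+1)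
          by ring]
      linear_combination h1 + (T ((k:ℤ)+1+1) : R) * h2 - (T ((n:ℤ)-(k:ℤ)) : R) * d1 - d2
        + gaussAux (T 1) n (k+1) * eA

lemma pascal2 (n : ℕ) (k : ℤ) :
    qbin (T 1) ((n : ℤ) + 1) k
      = T ((n : ℤ) + 1 - k) * qbin (T 1) n (k - 1) + qbin (T 1) n k := by
  rcases lt_trichotomy k 0 with hk | hk | hk
  · rw [qbin_neg hk, qbin_neg (by omega), qbin_neg hk]; simp
  · subst hk
    rw [qbin_neg (by omega : (0:ℤ) - 1 < 0), mul_zero, zero_add]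
    rw [show ((n:ℤ)+1) = ((n+1 : ℕ) : ℤ) by push_cast; ring, show (0:ℤ) = ((0:ℕ):ℤ) from rfl,
      qbin_natCast, qbin_natCast, gaussAux_zero_right, gaussAux_zero_right]
  · obtain ⟨m, rfl⟩ : ∃ m : ℕ, k = ((m+1 : ℕ) : ℤ) := ⟨(k-1).toNat, by omega⟩
    rw [show ((n:ℤ)+1) = ((n+1 : ℕ) : ℤ) by push_cast; ring,
      show ((m+1 : ℕ) : ℤ) - 1 = ((m : ℕ) : ℤ) by push_cast; ring,
      qbin_natCast, qbin_natCast, qbin_natCast, gauss_pascal2 n m]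
    rw [show (((n+1:ℕ):ℤ) - ((m+1:ℕ):ℤ)) = (n:ℤ) - (m:ℤ) by push_cast; ring]


open Function

lemma support_qbin {n : ℕ} {r j : ℤ} (h : qbin (T 1) (n : ℤ) (r - 2*j) ≠ 0) :
    j ∈ Set.Icc (min (r - (n:ℤ)) 0) (max r 0) := by
  have h1 : ¬ (r - 2*j < 0) := fun hc => h (qbin_neg hc)
  have h2 : ¬ ((n:ℤ) < r - 2*j) := fun hc => h (qbin_gt hc)
  simp only [Set.mem_Icc, le_max_iff, min_le_iff]
  omega

lemma supp_gen (g : ℤ → R) (n : ℕ) (r : ℤ) :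
    (Function.support fun j => g j * qbin (T 1) (n : ℤ) (r - 2*j)).Finite := by
  apply Set.Finite.subset (Set.finite_Icc (min (r - (n:ℤ)) 0) (max r 0))
  intro j hj
  simp only [Function.mem_support] at hj
  exact support_qbin fun h0 => hj (by rw [h0, mul_zero])

def fF (n : ℕ) (r : ℤ) (j : ℤ) : R := m1 j * T (2*j^2) * qbin (T 1) (n : ℤ) (r - 2*j)
def fH (n : ℕ) (s : ℤ) (j : ℤ) : R := m1 j * T (2*j^2 + 2*j) * qbin (T 1) (n : ℤ) (s - 2*j)

def Fs (n : ℕ) (r : ℤ) : R := ∑ᶠ j, fF n r j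
def Hs (n : ℕ) (s : ℤ) : R := ∑ᶠ j, fH n s j

lemma fF_fin (n : ℕ) (r : ℤ) : (support (fF n r)).Finite := supp_gen _ n r
lemma fH_fin (n : ℕ) (s : ℤ) : (support (fH n s)).Finite := supp_gen _ n s

lemma supp_shift {f : ℤ → R} (hf : (support f).Finite) (c : R) (t : ℤ) :
    (support fun j => -(c * f (j + t))).Finite := by
  have : (support fun j => -(c * f (j + t))) ⊆ (fun j => j + t) ⁻¹' (support f) := by
    intro j hj
    simp only [mem_support] at hj
    simp only [Set.mem_preimage, mem_support]
    intro h0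
    rw [h0, mul_zero, neg_zero] at hj
    exact hj rfl
  exact Set.Finite.subset (Set.Finite.preimage (Set.injOn_of_injective
    (fun a b hab => by omega)) hf) this

lemma finsum_shift (f : ℤ → R) (hf : (support f).Finite) (c : R) (t : ℤ) :
    (∑ᶠ j : ℤ, -(c * f (j + t))) = -(c * ∑ᶠ j : ℤ, f j) := by
  have h1 : (support fun j : ℤ => c * f (j + t)).Finite := by
    have := supp_shift hf c t
    have h2 : (support fun j : ℤ => c * f (j + t))
        = (support fun j : ℤ => -(c * f (j + t))) := by
      ext j; simp [mem_support]
    rw [h2]; exact this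
  rw [finsum_neg_distrib]
  congr 1
  have h3 : (support fun j : ℤ => f (j + t)).Finite := by
    apply Set.Finite.subset (Set.Finite.preimage (f := fun j : ℤ => j + t)
      (Set.injOn_of_injective (fun a b hab => by omega)) hf)
    intro j hj
    simpa [Set.mem_preimage, mem_support] using hj
  rw [← mul_finsum' _ _ h3]
  congr 1
  have := finsum_comp_equiv (Equiv.addRight t) (f := f)
  rw [← this]
  apply finsum_congr
  intro j
  simp [Equiv.coe_addRight]

lemma m1_succ (j : ℤ) : m1 (j+1) = -m1 j := by
  unfold m1
  rw [zpow_add_one]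
  push_cast
  ring

lemma m1_pred (j : ℤ) : m1 (j-1) = -m1 j := by
  have h := m1_succ (j-1)
  rw [show j - 1 + 1 = j by ring] at h
  linear_combination h

lemma m1_zero : m1 0 = 1 := by simp [m1]

-- R1 : Fs (n+1) r = Fs n (r-1) - T r * Hs n (r-2)
lemma pw1 (n : ℕ) (r j : ℤ) :
    fF (n+1) r j = fF n (r-1) j + -(T r * fH n (r-2) (j + -1)) := by
  simp only [fF, fH]
  push_cast
  rw [pascal1 n (r - 2*j)]
  rw [show r - 2*j - 1 = r - 1 - 2*j by ring, show (r-2) - 2*(j + -1) = r - 2*j by ring,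
    show (j + -1 : ℤ) = j - 1 by ring, m1_pred j]
  have e2 : (T (2*j^2) : R) * T (r - 2*j) = T r * T (2*(j-1)^2 + 2*(j-1)) := by
    rw [← T_add, ← T_add, show 2*j^2 + (r - 2*j) = r + (2*(j-1)^2 + 2*(j-1)) by ring]
  linear_combination (m1 j * qbin (T 1) (n:ℤ) (r - 2*j)) * e2

lemma R1 (n : ℕ) (r : ℤ) : Fs (n+1) r = Fs n (r-1) - T r * Hs n (r-2) := by
  rw [Fs, Fs, Hs]
  rw [finsum_congr (pw1 n r)]
  rw [finsum_add_distrib (fF_fin n (r-1)) (supp_shift (fH_fin n (r-2)) (T r) (-1))]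
  rw [finsum_shift _ (fH_fin n (r-2)) (T r) (-1)]
  ring

-- R2 : Fs (n+1) r = Fs n r + T (n+1-r) * Hs n (r-1)
lemma pw2 (n : ℕ) (r j : ℤ) :
    fF (n+1) r j = fF n r j + T ((n:ℤ)+1-r) * fH n (r-1) j := by
  simp only [fF, fH]
  push_cast
  rw [pascal2 n (r - 2*j)]
  rw [show r - 2*j - 1 = r - 1 - 2*j by ring]
  have e1 : (T (2*j^2) : R) * T ((n:ℤ) + 1 - (r - 2*j)) = T ((n:ℤ)+1-r) * T (2*j^2 + 2*j) := by
    rw [← T_add, ← T_add, show 2*j^2 + ((n:ℤ) + 1 - (r - 2*j)) = ((n:ℤ)+1-r) + (2*j^2 + 2*j)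
      by ring]
  linear_combination (m1 j * qbin (T 1) (n:ℤ) (r - 1 - 2*j)) * e1

lemma R2 (n : ℕ) (r : ℤ) : Fs (n+1) r = Fs n r + T ((n:ℤ)+1-r) * Hs n (r-1) := by
  rw [Fs, Fs, Hs]
  rw [finsum_congr (pw2 n r)]
  rw [finsum_add_distrib (fF_fin n r) ?_, mul_finsum' _ _ (fH_fin n (r-1))]
  have : (support fun j => T ((n:ℤ)+1-r) * fH n (r-1) j)
      ⊆ support (fH n (r-1)) := by
    intro j hj
    simp only [mem_support] at hj ⊢
    intro h0; rw [h0, mul_zero] at hj; exact hj rfl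
  exact Set.Finite.subset (fH_fin n (r-1)) this

-- R3 : Hs (n+1) s = Hs n (s-1) + T s * Fs n s
lemma pw3 (n : ℕ) (s j : ℤ) :
    fH (n+1) s j = fH n (s-1) j + T s * fF n s j := by
  simp only [fF, fH]
  push_cast
  rw [pascal1 n (s - 2*j)]
  rw [show s - 2*j - 1 = s - 1 - 2*j by ring]
  have e3 : (T (2*j^2 + 2*j) : R) * T (s - 2*j) = T s * T (2*j^2) := by
    rw [← T_add, ← T_add, show 2*j^2 + 2*j + (s - 2*j) = s + 2*j^2 by ring]
  linear_combination (m1 j * qbin (T 1) (n:ℤ) (s - 2*j)) * e3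

lemma R3 (n : ℕ) (s : ℤ) : Hs (n+1) s = Hs n (s-1) + T s * Fs n s := by
  rw [Hs, Hs, Fs]
  rw [finsum_congr (pw3 n s)]
  rw [finsum_add_distrib (fH_fin n (s-1)) ?_, mul_finsum' _ _ (fF_fin n s)]
  have : (support fun j => T s * fF n s j) ⊆ support (fF n s) := by
    intro j hj
    simp only [mem_support] at hj ⊢
    intro h0; rw [h0, mul_zero] at hj; exact hj rfl
  exact Set.Finite.subset (fF_fin n s) this

-- R4 : Hs (n+1) s = Hs n s - T (n-1-s) * Fs n (s+1)
lemma pw4 (n : ℕ) (s j : ℤ) :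
    fH (n+1) s j = fH n s j + -(T ((n:ℤ)-1-s) * fF n (s+1) (j + 1)) := by
  simp only [fF, fH]
  push_cast
  rw [pascal2 n (s - 2*j)]
  rw [show s - 2*j - 1 = s + 1 - 2*(j+1) by ring, m1_succ j]
  have e4 : (T (2*j^2 + 2*j) : R) * T ((n:ℤ) + 1 - (s - 2*j))
      = T ((n:ℤ)-1-s) * T (2*(j+1)^2) := by
    rw [← T_add, ← T_add,
      show 2*j^2 + 2*j + ((n:ℤ) + 1 - (s - 2*j)) = ((n:ℤ)-1-s) + 2*(j+1)^2 by ring]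
  linear_combination (m1 j * qbin (T 1) (n:ℤ) (s + 1 - 2*(j+1))) * e4

lemma R4 (n : ℕ) (s : ℤ) : Hs (n+1) s = Hs n s - T ((n:ℤ)-1-s) * Fs n (s+1) := by
  rw [Hs, Hs, Fs]
  rw [finsum_congr (pw4 n s)]
  rw [finsum_add_distrib (fH_fin n s) (supp_shift (fF_fin n (s+1)) (T ((n:ℤ)-1-s)) 1)]
  rw [finsum_shift _ (fF_fin n (s+1)) (T ((n:ℤ)-1-s)) 1]
  ring

lemma qbin_zero_row (x : R) (k : ℤ) : qbin x 0 k = if k = 0 then 1 else 0 := by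
  rcases lt_trichotomy k 0 with hk | hk | hk
  · rw [qbin_neg hk, if_neg (by omega)]
  · subst hk; simp [qbin, gaussAux_zero_right]
  · rw [qbin_gt (by omega), if_neg (by omega)]

lemma Fs0_eq (r : ℤ) (h : ∀ j : ℤ, r ≠ 2*j) : Fs 0 r = 0 := by
  rw [Fs]
  apply finsum_eq_zero_of_forall_eq_zero
  intro j
  rw [fF, Nat.cast_zero, qbin_zero_row, if_neg (by have := h j; omega), mul_zero]

lemma Fs0_zero : Fs 0 0 = 1 := by
  rw [Fs, finsum_eq_single _ 0]
  · norm_num [fF, qbin_zero_row, m1_zero, T_zero]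
  · intro j hj
    rw [fF, Nat.cast_zero, qbin_zero_row, if_neg (by omega), mul_zero]

lemma Hs0_eq (s : ℤ) (h : ∀ j : ℤ, s ≠ 2*j) : Hs 0 s = 0 := by
  rw [Hs]
  apply finsum_eq_zero_of_forall_eq_zero
  intro j
  rw [fH, Nat.cast_zero, qbin_zero_row, if_neg (by have := h j; omega), mul_zero]

lemma Hs0_zero : Hs 0 0 = 1 := by
  rw [Hs, finsum_eq_single _ 0]
  · norm_num [fH, qbin_zero_row, m1_zero, T_zero]
  · intro j hj
    rw [fH, Nat.cast_zero, qbin_zero_row, if_neg (by omega), mul_zero]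

lemma m1_neg_one : m1 (-1) = -1 := by
  have h := m1_pred 0
  rw [m1_zero, show (0:ℤ) - 1 = -1 by ring] at h
  linear_combination h

lemma Hs0_neg_two : Hs 0 (-2) = -1 := by
  rw [Hs, finsum_eq_single _ (-1)]
  · rw [fH, Nat.cast_zero]
    norm_num [qbin_zero_row, m1_neg_one, T_zero]
  · intro j hj
    rw [fH, Nat.cast_zero, qbin_zero_row, if_neg (by omega), mul_zero]

def Pp (m : ℕ) : R := ∏ k ∈ Finset.Icc 1 m, (1 + T (2*(k:ℤ) - 1))

lemma Pp_zero : Pp 0 = 1 := by simp [Pp]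

lemma Pp_succ (m : ℕ) : Pp (m+1) = Pp m * (1 + T (2*(m:ℤ)+1)) := by
  rw [Pp, Pp, Finset.prod_Icc_succ_top (by omega : 1 ≤ m + 1)]
  rw [show 2*((m+1 : ℕ):ℤ) - 1 = 2*(m:ℤ)+1 by push_cast; ring]

lemma key (L : ℕ) (hL : 1 ≤ L) :
    Fs (2*L) ((L:ℤ)-1) = Pp (L-1) * (1 - T (2*(L:ℤ))) ∧
    Fs (2*L) (L:ℤ) = Pp L ∧
    Hs (2*L) ((L:ℤ)-1) = 0 ∧
    Hs (2*L) ((L:ℤ)-2) = -(T ((L:ℤ)-1) * (1 + T 1) * Pp (L-1)) := by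
  induction L, hL using Nat.le_induction with
  | base =>
    have f01 : Fs 0 1 = 0 := Fs0_eq 1 (by omega)
    have f0m1 : Fs 0 (-1) = 0 := Fs0_eq (-1) (by omega)
    have h0m1 : Hs 0 (-1) = 0 := Hs0_eq (-1) (by omega)
    have f11 : Fs 1 1 = 1 := by
      have h := R2 0 1
      rw [show (1:ℤ) - 1 = 0 by ring, f01, Hs0_zero] at h
      rw [h]
      norm_num [T_zero]
    have f10 : Fs 1 0 = 1 := by
      have h := R1 0 0
      rw [show (0:ℤ) - 1 = -1 by ring, show (0:ℤ) - 2 = -2 by ring, f0m1, Hs0_neg_two] at h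
      rw [h, T_zero]
      ring
    have h10 : Hs 1 0 = 1 := by
      have h := R3 0 0
      rw [show (0:ℤ) - 1 = -1 by ring, h0m1, Fs0_zero, T_zero] at h
      rw [h]
      ring
    have h1m1 : Hs 1 (-1) = -1 := by
      have h := R3 0 (-1)
      rw [show (-1:ℤ) - 1 = -2 by ring, Hs0_neg_two, f0m1] at h
      rw [h]
      ring
    have p1 : Pp 1 = 1 + T 1 := by
      rw [show (1:ℕ) = 0 + 1 from rfl, Pp_succ, Pp_zero]
      norm_num
    refine ⟨?_, ?_, ?_, ?_⟩
    · have h := R2 1 0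
      rw [show (0:ℤ) - 1 = -1 by ring, f10, h1m1] at h
      rw [show 2*1 = 1+1 from rfl, show ((1:ℕ):ℤ) - 1 = 0 by norm_num, h, Pp_zero,
        show ((1:ℕ):ℤ) + 1 - 0 = 2 by norm_num, show 2*((1:ℕ):ℤ) = 2 by norm_num]
      ring
    · have h := R2 1 1
      rw [show (1:ℤ) - 1 = 0 by ring, f11, h10] at h
      rw [show 2*1 = 1+1 from rfl, show ((1:ℕ):ℤ) = 1 by norm_num, h, p1,
        show ((1:ℕ):ℤ) + 1 - 1 = 1 by norm_num]
      ring
    · have h := R3 1 0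
      rw [show (0:ℤ) - 1 = -1 by ring, h1m1, f10, T_zero] at h
      rw [show 2*1 = 1+1 from rfl, show ((1:ℕ):ℤ) - 1 = 0 by norm_num, h]
      ring
    · have h := R4 1 (-1)
      rw [show (-1:ℤ) + 1 = 0 by ring, h1m1, f10,
        show ((1:ℕ):ℤ) - 1 - (-1) = 1 by norm_num] at h
      rw [show 2*1 = 1+1 from rfl, show ((1:ℕ):ℤ) - 2 = -1 by norm_num, h, Pp_zero,
        show ((1:ℕ):ℤ) - 1 = 0 by norm_num, T_zero]
      ring
  | succ m hm ih =>
    obtain ⟨k, rfl⟩ : ∃ k, m = k + 1 := ⟨m - 1, by omega⟩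
    obtain ⟨A, B, h1, h2⟩ := ih
    rw [show ((k+1 : ℕ):ℤ) - 1 = (k:ℤ) by push_cast; ring,
      show 2*((k+1 : ℕ):ℤ) = 2*(k:ℤ)+2 by push_cast; ring,
      show k+1-1 = k by omega] at A
    rw [show ((k+1 : ℕ):ℤ) = (k:ℤ)+1 by push_cast; ring] at B
    rw [show ((k+1 : ℕ):ℤ) - 1 = (k:ℤ) by push_cast; ring] at h1
    rw [show ((k+1 : ℕ):ℤ) - 2 = (k:ℤ)-1 by push_cast; ring,
      show ((k+1 : ℕ):ℤ) - 1 = (k:ℤ) by push_cast; ring,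
      show k+1-1 = k by omega] at h2
    -- odd row values
    have pf : Fs (2*(k+1)+1) ((k:ℤ)+1) = Pp (k+1) := by
      have h := R2 (2*(k+1)) ((k:ℤ)+1)
      rw [show (k:ℤ)+1-1 = (k:ℤ) by ring, B, h1, mul_zero, add_zero] at h
      exact h
    have ph : Hs (2*(k+1)+1) ((k:ℤ)) = -(T ((k:ℤ)+1) * Pp (k+1)) := by
      have h := R3 (2*(k+1)) ((k:ℤ))
      rw [h2, A] at h
      rw [h, Pp_succ k, show 2*(k:ℤ)+2 = 1 + (2*(k:ℤ)+1) by ring, T_add 1 (2*(k:ℤ)+1), T_add (k:ℤ) 1]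
      ring
    refine ⟨?_, ?_, ?_, ?_⟩
    · -- A at k+2
      have h := R2 (2*(k+1)+1) ((k:ℤ)+1)
      rw [show (k:ℤ)+1-1 = (k:ℤ) by ring, pf, ph,
        show ((2*(k+1)+1 : ℕ):ℤ) + 1 - ((k:ℤ)+1) = (k:ℤ)+3 by push_cast; ring] at h
      rw [show 2*(k+1+1) = 2*(k+1)+1+1 by omega,
        show ((k+1+1 : ℕ):ℤ) - 1 = (k:ℤ)+1 by push_cast; ring,
        show k+1+1-1 = k+1 by omega, h,
        show 2*((k+1+1 : ℕ):ℤ) = ((k:ℤ)+3) + ((k:ℤ)+1) by push_cast; ring, T_add ((k:ℤ)+3) ((k:ℤ)+1)]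
      ring
    · -- B at k+2
      have h := R1 (2*(k+1)+1) ((k:ℤ)+2)
      rw [show (k:ℤ)+2-1 = (k:ℤ)+1 by ring, show (k:ℤ)+2-2 = (k:ℤ) by ring, pf, ph] at h
      rw [show 2*(k+1+1) = 2*(k+1)+1+1 by omega,
        show ((k+1+1 : ℕ):ℤ) = (k:ℤ)+2 by push_cast; ring, h, Pp_succ (k+1),
        show 2*((k+1 : ℕ):ℤ)+1 = ((k:ℤ)+2) + ((k:ℤ)+1) by push_cast; ring, T_add ((k:ℤ)+2) ((k:ℤ)+1)]
      ring
    · -- h1 at k+2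
      have h := R3 (2*(k+1)+1) ((k:ℤ)+1)
      rw [show (k:ℤ)+1-1 = (k:ℤ) by ring, ph, pf] at h
      rw [show 2*(k+1+1) = 2*(k+1)+1+1 by omega,
        show ((k+1+1 : ℕ):ℤ) - 1 = (k:ℤ)+1 by push_cast; ring, h]
      ring
    · -- h2 at k+2
      have h := R4 (2*(k+1)+1) ((k:ℤ))
      rw [pf, ph,
        show ((2*(k+1)+1 : ℕ):ℤ) - 1 - (k:ℤ) = (k:ℤ)+2 by push_cast; ring] at h
      rw [show 2*(k+1+1) = 2*(k+1)+1+1 by omega,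
        show ((k+1+1 : ℕ):ℤ) - 2 = (k:ℤ) by push_cast; ring,
        show ((k+1+1 : ℕ):ℤ) - 1 = (k:ℤ)+1 by push_cast; ring,
        show k+1+1-1 = k+1 by omega, h,
        show (k:ℤ)+2 = ((k:ℤ)+1)+1 by ring, T_add ((k:ℤ)+1) 1]
      ring

theorem stmt4' (L : ℕ) (hL : 0 < L) :
    (∑ᶠ j : ℤ, m1 j * T (2 * j ^ 2) * qbin (T 1) (2 * L) (L - 2 * j - 1)) =
      (∏ k ∈ Finset.Icc 1 (L - 1), (1 + T (2 * (k : ℤ) - 1))) * (1 - T (2 * L)) := by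
  have hA := (key L hL).1
  have heq : (∑ᶠ j : ℤ, m1 j * T (2 * j ^ 2) * qbin (T 1) (2 * L) (L - 2 * j - 1))
      = Fs (2*L) ((L:ℤ)-1) := by
    rw [Fs]
    apply finsum_congr
    intro j
    rw [fF, show (((2*L : ℕ)):ℤ) = 2*(L:ℤ) by push_cast; ring,
      show ((L:ℤ)-1) - 2*j = (L:ℤ) - 2*j - 1 by ring]
  rw [heq, hA, Pp]

end Stmt4aux

theorem stmt4 (L : ℕ) (hL : 0 < L) :
    (∑ᶠ j : ℤ, m1 j * T (2 * j ^ 2) * qbin (T 1) (2 * L) (L - 2 * j - 1)) =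
      (∏ k ∈ Finset.Icc 1 (L - 1), (1 + T (2 * (k : ℤ) - 1))) * (1 - T (2 * L)) :=
  Stmt4aux.stmt4' L hL
end
end

section
/- For every positive natural number L, define Z(L) = Σ_j (-1)^j q^(2j²-j) [2L+1 choose L-2j]_q. Then 2·Z(L) = (-1;q²)_L (1 + q^L + q^(L+1) - q^(2L+1)), where (-1;q²)_L = ∏_{k=0}^{L-1}(1+q^(2k)) = 2∏_{k=1}^{L-1}(1+q^(2k)). -/
open LaurentPolynomial Finset

noncomputable section

section Gb
variable {R : Type*} [CommRing R] {S : Type*} [CommRing S]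

/-- general Gaussian binomial -/
def gb (q : R) : ℕ → ℕ → R
  | _, 0 => 1
  | 0, _ + 1 => 0
  | n + 1, k + 1 => gb q n k + q ^ (k + 1) * gb q n (k + 1)

@[simp] lemma gb_zero (q : R) (n : ℕ) : gb q n 0 = 1 := by cases n <;> rfl

@[simp] lemma gb_zero_succ (q : R) (k : ℕ) : gb q 0 (k+1) = 0 := rfl

lemma gb_succ (q : R) (n k : ℕ) :
    gb q (n+1) (k+1) = gb q n k + q ^ (k + 1) * gb q n (k + 1) := rfl

lemma gb_eq_zero (q : R) {n k : ℕ} (h : n < k) : gb q n k = 0 := by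
  induction n generalizing k with
  | zero => cases k with
    | zero => omega
    | succ k => rfl
  | succ n ih =>
    cases k with
    | zero => omega
    | succ k => rw [gb_succ, ih (by omega), ih (by omega), mul_zero, add_zero]

lemma gb_map (f : R →+* S) (q : R) (n k : ℕ) : f (gb q n k) = gb (f q) n k := by
  induction n generalizing k with
  | zero => cases k <;> simp
  | succ n ih => cases k with
    | zero => simp
    | succ k => simp [gb_succ, ih]

lemma gaussAux_eq_gb (x : LaurentPolynomial ℤ) (n k : ℕ) : gaussAux x n k = gb x n k := by
  induction n generalizing k with
  | zero => cases k <;> rfl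
  | succ n ih => cases k with
    | zero => rfl
    | succ k => rw [gaussAux, gb_succ, ih, ih]

lemma c2succ (k : ℕ) : (k+1).choose 2 = k.choose 2 + k := by
  simp [Nat.choose_succ_succ, Nat.choose_one_right, add_comm]

/-- q-binomial theorem -/
theorem gb_sum (q : R) (n : ℕ) (t : R) :
    ∑ k ∈ range (n+1), gb q n k * q ^ (k.choose 2) * t ^ k
      = ∏ s ∈ range n, (1 + t * q ^ s) := by
  induction n generalizing t with
  | zero => simp
  | succ n ih =>
    have key : ∑ k ∈ range (n+2), gb q (n+1) k * q ^ (k.choose 2) * t ^ k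
        = (1 + t) * ∑ k ∈ range (n+1), gb q n k * q ^ ((k+1).choose 2) * t ^ k := by
      have h3 : (∑ k ∈ range (n+1), gb q n (k+1) * q ^ ((k+1+1).choose 2) * t ^ (k+1)) + 1
          = ∑ k ∈ range (n+1), gb q n k * q ^ ((k+1).choose 2) * t ^ k := by
        have h4 := Finset.sum_range_succ' (fun k => gb q n k * q ^ ((k+1).choose 2) * t ^ k) (n+1)
        rw [Finset.sum_range_succ (fun k => gb q n k * q ^ ((k+1).choose 2) * t ^ k) (n+1),
          gb_eq_zero q (by omega : n < n+1)] at h4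
        norm_num at h4
        rw [← h4]
      rw [Finset.sum_range_succ' (fun k => gb q (n+1) k * q ^ (k.choose 2) * t ^ k) (n+1)]
      have h5 : ∀ k ∈ range (n+1), gb q (n+1) (k+1) * q ^ ((k+1).choose 2) * t ^ (k+1)
          = t * (gb q n k * q ^ ((k+1).choose 2) * t ^ k)
            + gb q n (k+1) * q ^ ((k+1+1).choose 2) * t ^ (k+1) := by
        intro k _
        rw [gb_succ, c2succ (k+1), pow_add]
        ring
      rw [Finset.sum_congr rfl h5, Finset.sum_add_distrib]
      norm_num
      rw [add_assoc, h3, ← Finset.mul_sum]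
      ring
    have hG : ∑ k ∈ range (n+1), gb q n k * q ^ ((k+1).choose 2) * t ^ k
        = ∑ k ∈ range (n+1), gb q n k * q ^ (k.choose 2) * (t*q) ^ k := by
      refine Finset.sum_congr rfl fun k _ => ?_
      rw [c2succ, pow_add, mul_pow]
      ring
    rw [key, hG, ih (t*q), Finset.prod_range_succ']
    have h6 : ∀ s ∈ range n, (1 + (t*q) * q^s) = (1 + t * q^(s+1)) := by
      intro s _; rw [pow_succ]; ring
    rw [Finset.prod_congr rfl h6, pow_zero, mul_one, mul_comm]

end Gb

section LemB
variable {S : Type*} [CommRing S]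

lemma lemB (x : LaurentPolynomial S) (hx : x * x = -1) (n : ℕ) :
    x^(n+1) * T (((n+1).choose 2 : ℕ) : ℤ) *
        ∏ s ∈ range (2*(n+1)+1), (1 + (-x) * T ((s:ℤ) - n))
      = (1 + x) * (∏ k ∈ range n, (1 + T (2*(k:ℤ)+2))) *
          ((1 - x * T ((n:ℤ)+1)) * (1 - x * T ((n:ℤ)+2))) := by
  induction n with
  | zero =>
    simp only [Nat.choose_self, Nat.cast_one, Nat.cast_zero, Nat.cast_ofNat, range_zero,
      prod_empty, mul_one, one_mul]
    norm_num
    rw [Finset.prod_range_succ, Finset.prod_range_succ, Finset.prod_range_succ,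
      Finset.prod_range_zero]
    norm_num [T_zero]
    linear_combination (-(1 - x * T 1) * (1 - x * T 2)) * hx
  | succ n ih =>
    -- split the product
    have hrange : 2*(n+1+1)+1 = (2*(n+1)+1)+1+1 := by ring
    rw [hrange]
    rw [Finset.prod_range_succ, Finset.prod_range_succ']
    have hmid : ∀ s ∈ range (2*(n+1)+1),
        (1 + (-x) * T (((s+1:ℕ):ℤ) - (n+1:ℕ))) = (1 + (-x) * T ((s:ℤ) - n)) := by
      intro s _
      congr 1
      congr 1
      push_cast
      ring
    rw [Finset.prod_congr rfl hmid]
    have hc2 : (((n+1+1).choose 2 : ℕ) : ℤ) = (((n+1).choose 2 : ℕ) : ℤ) + (n+1) := by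
      rw [c2succ (n+1)]
      push_cast; ring
    rw [hc2, T_add (((n+1).choose 2 : ℕ) : ℤ) ((n:ℤ)+1)]
    have ha : T ((n:ℤ)+1) * T (((0:ℕ):ℤ) - ((n+1:ℕ):ℤ)) = (1 : LaurentPolynomial S) := by
      rw [← T_add, show ((n:ℤ)+1) + (((0:ℕ):ℤ) - ((n+1:ℕ):ℤ)) = 0 by push_cast; ring, T_zero]
    have hb : T ((n:ℤ)+1) * T ((n:ℤ)+1) = (T (2*(n:ℤ)+2) : LaurentPolynomial S) := by
      rw [← T_add, show (n:ℤ)+1+((n:ℤ)+1) = 2*(n:ℤ)+2 by ring]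
    have htop : ((2*(n+1)+1 : ℕ) : ℤ) - ((n:ℤ)+1) = (n:ℤ)+2 := by push_cast; ring
    rw [Finset.prod_range_succ (fun k => (1:LaurentPolynomial S) + T (2*(k:ℤ)+2)) n,
      show ((n+1:ℕ):ℤ)+1 = (n:ℤ)+2 by push_cast; ring,
      show ((n+1:ℕ):ℤ)+2 = (n:ℤ)+3 by push_cast; ring,
      show ((2*(n+1)+2:ℕ):ℤ) - ((n+1:ℕ):ℤ) = (n:ℤ)+3 by push_cast; ring]
    linear_combination
      (x * T ((n:ℤ)+1) * (1 + -x * T (((0:ℕ):ℤ) - ((n+1:ℕ):ℤ))) * (1 + -x * T ((n:ℤ)+3))) * ih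
      + ((1+x) * (∏ k ∈ Finset.range n, (1 + T (2*(k:ℤ)+2))) * (1 - x * T ((n:ℤ)+2))
          * (1 - x * T ((n:ℤ)+3))) *
        ((- T ((n:ℤ)+1) * T (((0:ℕ):ℤ) - ((n+1:ℕ):ℤ)) - T ((n:ℤ)+1) * T ((n:ℤ)+1)
            + x * T ((n:ℤ)+1) * T ((n:ℤ)+1) * T (((0:ℕ):ℤ) - ((n+1:ℕ):ℤ))) * hx
          + (1 - x * T ((n:ℤ)+1)) * ha + hb)
end LemB

section Transfer

/-- `T` as a monoid hom from `Multiplicative ℤ`. -/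
def Tmh {S : Type*} [CommRing S] : Multiplicative ℤ →* LaurentPolynomial S where
  toFun n := T (Multiplicative.toAdd n)
  map_one' := T_zero
  map_mul' a b := T_add _ _

/-- coefficient extension `ℤ → ℤ[i]` on Laurent polynomials. -/
def phi : LaurentPolynomial ℤ →+* LaurentPolynomial GaussianInt :=
  AddMonoidAlgebra.liftNCRingHom
    ((C : GaussianInt →+* LaurentPolynomial GaussianInt).comp (Int.castRingHom GaussianInt))
    Tmh (fun _ _ => Commute.all _ _)

lemma phi_single (n : ℤ) (a : ℤ) :
    phi (AddMonoidAlgebra.single n a) = AddMonoidAlgebra.single n ((a : GaussianInt)) := by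
  have h := AddMonoidAlgebra.liftNC_single (G := ℤ)
    (((C : GaussianInt →+* LaurentPolynomial GaussianInt).comp
        (Int.castRingHom GaussianInt) : ℤ →+* LaurentPolynomial GaussianInt) :
      ℤ →+ LaurentPolynomial GaussianInt)
    (⇑(Tmh (S := GaussianInt))) n a
  have h2 : phi (AddMonoidAlgebra.single n a) = C ((a : GaussianInt)) * T n := h
  rw [h2, ← single_eq_C_mul_T]

lemma phi_eq (p : LaurentPolynomial ℤ) :
    phi p = AddMonoidAlgebra.map (Int.castAddHom GaussianInt) p := by
  induction p using AddMonoidAlgebra.induction_linear with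
  | zero => simp
  | add f g hf hg => rw [map_add, hf, hg, AddMonoidAlgebra.map_add]
  | single n a => rw [phi_single, AddMonoidAlgebra.map_single]; rfl

lemma phi_inj : Function.Injective phi := by
  intro p q h
  rw [phi_eq, phi_eq] at h
  exact AddMonoidAlgebra.map_injective _ (fun a b => by simp only [Int.coe_castAddHom]; exact_mod_cast fun h => h) h

@[simp] lemma phi_T (n : ℤ) : phi (T n) = T n := by
  have : (T n : LaurentPolynomial ℤ) = AddMonoidAlgebra.single n 1 := rfl
  rw [this, phi_single]
  rfl

@[simp] lemma phi_C (a : ℤ) : phi (C a) = C ((a : GaussianInt)) := by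
  rw [← single_eq_C (R := ℤ), phi_single, single_eq_C]

end Transfer

section Assembly

abbrev ii : GaussianInt := Zsqrtd.sqrtd

lemma ii_mul_ii : ii * ii = -1 := by
  rw [Zsqrtd.dmuld]
  norm_num

lemma Cii_mul_Cii : (C ii : LaurentPolynomial GaussianInt) * C ii = -1 := by
  rw [← map_mul, ii_mul_ii, map_neg, map_one]

lemma coeffG {L n k : ℕ} (h : k + 2*n = 3*L) :
    ii^L * (-ii)^k + (-ii)^L * ii^k = 2 * (-1)^(n+L) := by
  have h2 : ii * ii = -1 := ii_mul_ii
  have hsq : ii^2 = -1 := by rw [pow_two, h2]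
  have h2n : ii^(2*n) = (-1)^n := by rw [pow_mul, hsq]
  have hLk : ii^(L+k) = (-1)^n := by
    have h4 : ii^(L+k) * ii^(2*n) = 1 := by
      rw [← pow_add, show L+k+2*n = 4*L by omega, show 4*L = 2*(2*L) by ring, pow_mul, hsq]
      simp [pow_mul]
    have h5 : ii^(L+k) * (-1:GaussianInt)^n = 1 := by rwa [h2n] at h4
    have h6 : ((-1:GaussianInt)^n) * ((-1:GaussianInt)^n) = 1 := by
      rw [← pow_add, ← two_mul, pow_mul]; norm_num
    calc ii^(L+k) = ii^(L+k) * (((-1:GaussianInt)^n) * ((-1:GaussianInt)^n)) := by rw [h6, mul_one]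
      _ = (ii^(L+k) * (-1:GaussianInt)^n) * (-1:GaussianInt)^n := by ring
      _ = (-1)^n := by rw [h5, one_mul]
  have hpar : (-1:GaussianInt)^k = (-1)^L := by
    rcases Nat.even_or_odd L with hL | hL
    · have hk : Even k := by rcases hL with ⟨m, hm⟩; exact ⟨L + m - n, by omega⟩
      rw [hk.neg_one_pow, hL.neg_one_pow]
    · have hk : Odd k := by rcases hL with ⟨m, hm⟩; exact ⟨L + m - n, by omega⟩
      rw [hk.neg_one_pow, hL.neg_one_pow]
  calc ii^L * (-ii)^k + (-ii)^L * ii^k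
      = ((-1)^k + (-1)^L) * ii^(L+k) := by rw [neg_pow, neg_pow, pow_add]; ring
    _ = (2 * (-1)^L) * (-1)^n := by rw [hpar, hLk]; ring
    _ = 2 * (-1)^(n+L) := by rw [pow_add]; ring

lemma coeffG0 {L k : ℕ} (h : (L + k) % 2 = 1) :
    ii^L * (-ii)^k + (-ii)^L * ii^k = 0 := by
  have hpar : (-1:GaussianInt)^k = -(-1)^L := by
    rcases Nat.even_or_odd L with hL | hL
    · have hk : Odd k := by rcases hL with ⟨m, hm⟩; exact ⟨(L+k)/2 - m, by omega⟩
      rw [hk.neg_one_pow, hL.neg_one_pow]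
    · have hk : Even k := by
        rcases hL with ⟨m, hm⟩
        exact (Nat.even_iff).2 (by omega)
      rw [hk.neg_one_pow, hL.neg_one_pow]
      simp
  calc ii^L * (-ii)^k + (-ii)^L * ii^k
      = ((-1)^k + (-1)^L) * ii^(L+k) := by rw [neg_pow, neg_pow, pow_add]; ring
    _ = 0 := by rw [hpar]; ring

lemma m1val (j : ℤ) (n LL : ℕ) (h : j = (n:ℤ) - LL) :
    (((-1 : ℤˣ) ^ j : ℤˣ) : ℤ) = (-1)^(n + LL) := by
  subst h
  rw [zpow_sub, zpow_natCast, zpow_natCast, ← inv_pow,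
    show ((-1:ℤˣ))⁻¹ = -1 by decide, ← pow_add]
  simp

lemma cast_choose_two (n : ℕ) : 2 * ((n.choose 2 : ℕ) : ℤ) = (n:ℤ) * ((n:ℤ) - 1) := by
  induction n with
  | zero => simp
  | succ n ih =>
    rw [c2succ]
    push_cast
    push_cast at ih
    linarith

end Assembly

section Main

lemma lemB' (x : LaurentPolynomial GaussianInt) (hx : x * x = -1) (L : ℕ) (hL : 0 < L) :
    x^L * T ((L.choose 2 : ℕ) : ℤ) * ∏ s ∈ range (2*L+1), (1 + (-x) * T ((s:ℤ) + 1 - L))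
      = (1 + x) * (∏ k ∈ range (L-1), (1 + T (2*(k:ℤ)+2))) *
          ((1 - x * T (L:ℤ)) * (1 - x * T ((L:ℤ)+1))) := by
  obtain ⟨n, rfl⟩ : ∃ n, L = n+1 := ⟨L-1, by omega⟩
  have h := lemB x hx n
  have h1 : ∀ s ∈ range (2*(n+1)+1), (1 + (-x) * T ((s:ℤ) + 1 - ((n+1:ℕ):ℤ)))
      = (1 + (-x) * T ((s:ℤ) - (n:ℤ))) := by
    intro s _
    rw [show (s:ℤ) + 1 - ((n+1:ℕ):ℤ) = (s:ℤ) - (n:ℤ) by push_cast; ring]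
  rw [Finset.prod_congr rfl h1,
    show ((n+1:ℕ):ℤ) = (n:ℤ)+1 by push_cast; ring,
    show (n+1)-1 = n from rfl,
    show (n:ℤ)+1+1 = (n:ℤ)+2 by ring]
  rw [h]

theorem stmt8 (L : ℕ) (hL : 0 < L) :
    2 * (∑ᶠ j : ℤ, m1 j * T (2 * j ^ 2 - j) * qbin (T 1) (2 * L + 1) (L - 2 * j)) =
      (∏ k ∈ Finset.range L, (1 + T (2 * (k : ℤ)))) *
        (1 + T L + T ((L : ℤ) + 1) - T (2 * L + 1)) := by
    classical
  set f : ℤ → LaurentPolynomial ℤ :=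
    fun j => m1 j * T (2 * j ^ 2 - j) * qbin (T 1) (2 * L + 1) (L - 2 * j) with hf
  set J : Finset ℤ := (Finset.Icc (-(L:ℤ)) L).filter
    (fun j => 0 ≤ (L:ℤ) - 2*j ∧ (L:ℤ) - 2*j ≤ 2*(L:ℤ)+1) with hJdef
  have hsupp : Function.support f ⊆ ↑J := by
    intro j hj
    simp only [Function.mem_support, hf] at hj
    by_contra hmem
    apply hj
    simp only [hJdef, Finset.coe_filter, Finset.mem_Icc, Set.mem_setOf_eq] at hmem
    push_neg at hmem
    rcases le_or_gt ((L:ℤ) - 2*j) (-1) with hneg | hpos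
    · rw [qbin, if_neg (by omega), mul_zero]
    · rcases le_or_gt ((L:ℤ) - 2*j) (2*(L:ℤ)+1) with hle | hgt
      · exfalso; omega
      · rw [qbin, if_pos ⟨by omega, by omega⟩, gaussAux_eq_gb, gb_eq_zero _ (by omega), mul_zero]
  rw [finsum_eq_sum_of_support_subset f hsupp]
  apply phi_inj
  simp only [map_mul, map_sum, map_sub, map_add, map_one, map_ofNat, phi_T]
  rw [map_prod]
  have hphiprod : ∀ k ∈ Finset.range L, phi (1 + T (2 * (k:ℤ))) = 1 + T (2 * (k:ℤ)) := by
    intro k _; rw [map_add, map_one, phi_T]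
  rw [Finset.prod_congr rfl hphiprod, Finset.mul_sum]
  -- the k-indexed sum
  set u : LaurentPolynomial GaussianInt := C ii with hu
  have hu2 : u * u = -1 := Cii_mul_Cii
  set f2 : ℕ → LaurentPolynomial GaussianInt := fun k =>
    (u^L * (-u)^k + (-u)^L * u^k) *
      T (((L.choose 2 : ℕ) : ℤ) + (k:ℤ)*(1-(L:ℤ)) + ((k.choose 2 : ℕ) : ℤ)) *
      gb (T 1) (2*L+1) k with hf2
  have claim1 : ∑ j ∈ J, 2 * phi (f j) = ∑ k ∈ Finset.range (2*L+2), f2 k := by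
    have hzero : ∀ k ∈ Finset.range (2*L+2), f2 k ≠ 0 → (L + k) % 2 = 0 := by
      intro k _ hk
      by_contra hpar
      apply hk
      have : u^L * (-u)^k + (-u)^L * u^k = 0 := by
        rw [hu, ← map_neg C, ← map_pow, ← map_pow, ← map_pow, ← map_pow, ← map_mul, ← map_mul,
          ← map_add, coeffG0 (by omega), map_zero]
      rw [hf2]
      simp only [this, zero_mul]
    rw [← Finset.sum_filter_of_ne hzero]
    refine Finset.sum_nbij' (fun j => ((L:ℤ) - 2*j).toNat) (fun k => ((L:ℤ) - k)/2)
      ?_ ?_ ?_ ?_ ?_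
    · intro j hj
      simp only [hJdef, Finset.mem_filter, Finset.mem_Icc] at hj
      simp only [Finset.mem_filter, Finset.mem_range]
      constructor
      · omega
      · omega
    · intro k hk
      simp only [Finset.mem_filter, Finset.mem_range] at hk
      simp only [hJdef, Finset.mem_filter, Finset.mem_Icc]
      constructor
      · constructor <;> omega
      · constructor <;> omega
    · intro j hj
      simp only [hJdef, Finset.mem_filter, Finset.mem_Icc] at hj
      omega
    · intro k hk
      simp only [Finset.mem_filter, Finset.mem_range] at hk
      omega
    · intro j hj
      simp only [hJdef, Finset.mem_filter, Finset.mem_Icc] at hj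
      set k : ℕ := ((L:ℤ) - 2*j).toNat with hk
      have hkz : (k:ℤ) = (L:ℤ) - 2*j := by omega
      set n : ℕ := (j + L).toNat with hn
      have hnz : (n:ℤ) = j + L := by omega
      -- unfold f j
      rw [hf]
      simp only
      rw [qbin, if_pos ⟨by omega, by omega⟩, gaussAux_eq_gb,
        show ((2*(L:ℤ)+1)).toNat = 2*L+1 by omega,
        show ((L:ℤ) - 2*j).toNat = k from rfl]
      rw [map_mul, map_mul, gb_map phi, phi_T, phi_T]
      rw [show m1 j = ((((-1 : ℤˣ) ^ j : ℤˣ) : ℤ) : LaurentPolynomial ℤ) from rfl]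
      rw [map_intCast phi]
      rw [m1val j n L (by omega)]
      -- coefficient
      have hcoeff : u^L * (-u)^k + (-u)^L * u^k = C (2 * (-1:GaussianInt)^(n+L)) := by
        rw [hu, ← map_neg C, ← map_pow, ← map_pow, ← map_pow, ← map_pow, ← map_mul, ← map_mul,
          ← map_add, coeffG (n := n) (by omega)]
      -- exponent
      have c1 := cast_choose_two L
      have c2 := cast_choose_two k
      have hexp : ((L.choose 2 : ℕ) : ℤ) + (k:ℤ)*(1-(L:ℤ)) + ((k.choose 2 : ℕ) : ℤ)
          = 2 * j ^ 2 - j := by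
        have h2e : 2 * (((L.choose 2 : ℕ) : ℤ) + (k:ℤ)*(1-(L:ℤ)) + ((k.choose 2 : ℕ) : ℤ))
            = 2 * (2 * j ^ 2 - j) := by
          linear_combination c1 + c2 + (-((L:ℤ) - k + 2*j - 1)) * hkz
        omega
      rw [hf2]
      simp only
      rw [hcoeff, hexp]
      rw [show (2 : GaussianInt) * (-1)^(n+L) = ((2:GaussianInt)) * ((-1)^(n+L)) from rfl,
        map_mul C, map_pow, map_neg, map_one, map_ofNat]
      push_cast
      ring
  rw [claim1]
  -- now evaluate the k-sum
  have hsplit : ∀ k ∈ Finset.range (2*L+2), f2 k =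
      u^L * T ((L.choose 2 : ℕ) : ℤ) *
          (gb (T 1) (2*L+1) k * (T 1)^(k.choose 2) * ((-u) * T (1-(L:ℤ)))^k)
        + (-u)^L * T ((L.choose 2 : ℕ) : ℤ) *
          (gb (T 1) (2*L+1) k * (T 1)^(k.choose 2) * (u * T (1-(L:ℤ)))^k) := by
    intro k _
    rw [hf2]
    simp only
    simp only [mul_pow, T_pow, mul_one, T_add]
    ring
  rw [Finset.sum_congr rfl hsplit, Finset.sum_add_distrib, ← Finset.mul_sum, ← Finset.mul_sum,
    show 2*L+2 = (2*L+1)+1 by ring, gb_sum, gb_sum]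
  have hint1 : ∀ s ∈ Finset.range (2*L+1),
      (1 + ((-u) * T (1-(L:ℤ))) * (T 1)^s) = (1 + (-u) * T ((s:ℤ) + 1 - L)) := by
    intro s _
    rw [T_pow, mul_one, mul_assoc, ← T_add, show 1 - (L:ℤ) + s = (s:ℤ) + 1 - L by ring]
  have hint2 : ∀ s ∈ Finset.range (2*L+1),
      (1 + (u * T (1-(L:ℤ))) * (T 1)^s) = (1 + (-(-u)) * T ((s:ℤ) + 1 - L)) := by
    intro s _
    rw [T_pow, mul_one, mul_assoc, ← T_add, show 1 - (L:ℤ) + s = (s:ℤ) + 1 - L by ring,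
      neg_neg]
  rw [Finset.prod_congr rfl hint1, Finset.prod_congr rfl hint2]
  rw [lemB' u hu2 L hL, lemB' (-u) (by rw [neg_mul_neg]; exact hu2) L hL]
  -- final algebra
  have hprod : ∏ k ∈ Finset.range L, (1 + T (2 * (k:ℤ)))
      = 2 * ∏ k ∈ Finset.range (L-1), ((1:LaurentPolynomial GaussianInt) + T (2*(k:ℤ)+2)) := by
    obtain ⟨n, rfl⟩ : ∃ n, L = n+1 := ⟨L-1, by omega⟩
    rw [Finset.prod_range_succ']
    have : ∀ k ∈ Finset.range n, (1 + T (2 * ((k+1:ℕ):ℤ)))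
        = ((1:LaurentPolynomial GaussianInt) + T (2*(k:ℤ)+2)) := by
      intro k _
      rw [show 2 * ((k+1:ℕ):ℤ) = 2*(k:ℤ)+2 by push_cast; ring]
    rw [Finset.prod_congr rfl this]
    norm_num [T_zero]
    ring
  rw [hprod]
  have hab : T ((L:ℤ)) * T ((L:ℤ)+1) = (T (2*(L:ℤ)+1) : LaurentPolynomial GaussianInt) := by
    rw [← T_add, show (L:ℤ) + ((L:ℤ)+1) = 2*(L:ℤ)+1 by ring]
  linear_combination
    (2 * (∏ k ∈ Finset.range (L-1), ((1:LaurentPolynomial GaussianInt) + T (2*(k:ℤ)+2))) *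
      (T ((L:ℤ)) * T ((L:ℤ)+1) - T ((L:ℤ)) - T ((L:ℤ)+1))) * hu2
    + (-2 * (∏ k ∈ Finset.range (L-1), ((1:LaurentPolynomial GaussianInt) + T (2*(k:ℤ)+2)))) * hab
end Main
end
end
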